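/- Let Q be an m × n real matrix with m ≤ n. Suppose the transpose Qᵀ can be reduced to the empty (0 × 0) matrix by repeatedly applying the following 'column reduction' step: if some row of the current matrix has exactly one nonzero entry, located in column j, remove column j, and then remove all rows that have become entirely zero. Then Q has full rank m. -/

import Mathlib

open scoped Classical

/-- One step of the column reduction procedure on a fixed matrix `Q`,
acting on a state `(R, Cs)` of currently retained rows and columns:
remove all "innocuous" columns (columns `j ∈ Cs` such that some retained row has
its unique nonzero entry, among retained columns, in column `j`), then remove
all retained rows that have become entirely zero. -/
noncomputable def crStep {m n : ℕ} (Q : Matrix (Fin m) (Fin n) ℝ)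
    (st : Finset (Fin m) × Finset (Fin n)) : Finset (Fin m) × Finset (Fin n) :=
  let J : Finset (Fin n) :=
    st.2.filter (fun j => ∃ i ∈ st.1, Q i j ≠ 0 ∧ ∀ j' ∈ st.2, j' ≠ j → Q i j' = 0)
  let C' := st.2 \ J
  (st.1.filter (fun i => ∃ j ∈ C', Q i j ≠ 0), C')

/-- The column reduction procedure, started from the full matrix, terminates
in the void (0 × 0) matrix. -/
def crReducesToVoid {m n : ℕ} (Q : Matrix (Fin m) (Fin n) ℝ) : Prop :=
  ∃ k : ℕ, (crStep Q)^[k] (Finset.univ, Finset.univ) = (∅, ∅)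

lemma cr_key {m n : ℕ} (Q : Matrix (Fin m) (Fin n) ℝ) (c : Fin m → ℝ)
    (hc : ∀ i : Fin n, ∑ j, c j * Q j i = 0) :
    ∀ k : ℕ, ∀ j : Fin m,
      j ∉ ((crStep Q.transpose)^[k] (Finset.univ, Finset.univ)).2 → c j = 0 := by
  intro k
  induction k with
  | zero => intro j hj; exact absurd (Finset.mem_univ j) hj
  | succ k ih =>
    intro j hj
    rw [Function.iterate_succ_apply'] at hj
    set st := (crStep Q.transpose)^[k] (Finset.univ, Finset.univ) with hst
    simp only [crStep, Finset.mem_sdiff, not_and, not_not] at hj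
    by_cases hjC : j ∈ st.2
    · have hJ := hj hjC
      rw [Finset.mem_filter] at hJ
      obtain ⟨-, i, -, hne, huniq⟩ := hJ
      have hsum := hc i
      have : ∑ j', c j' * Q j' i = c j * Q j i := by
        apply Finset.sum_eq_single
        · intro j' _ hj'
          by_cases h' : j' ∈ st.2
          · rw [show Q j' i = Q.transpose i j' from rfl, huniq j' h' hj', mul_zero]
          · rw [ih j' h', zero_mul]
        · intro h; exact absurd (Finset.mem_univ j) h
      rw [this] at hsum
      exact (mul_eq_zero.mp hsum).resolve_right hne
    · exact ih j hjC

/-- If `Q` is an `m × n` real matrix with `m ≤ n` and the column reduction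
procedure applied to `Q.transpose` terminates in the void matrix, then `Q` has full rank `m`. -/
theorem stmt_0 {m n : ℕ} (hmn : m ≤ n) (Q : Matrix (Fin m) (Fin n) ℝ)
    (h : crReducesToVoid Q.transpose) : Q.rank = m := by
  obtain ⟨k, hk⟩ := h
  have hli : LinearIndependent ℝ Q := by
    refine Fintype.linearIndependent_iff.mpr ?_
    intro c hc j
    apply cr_key Q c _ k j
    · rw [hk]; exact Finset.notMem_empty j
    · intro i
      have := congrFun hc i
      simpa [Finset.sum_apply, Pi.smul_apply, smul_eq_mul] using this
  rw [hli.rank_matrix, Fintype.card_fin]
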